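/- Let R be a commutative local ring and let s ∈ J(R). The following are equivalent: (1) K_s(R) is a quasipolar ring; (2) for all u, v ∈ U(R) and w ∈ J(R), the equation t² − (u+w)t + (uw − sv) = 0 has a solution in R; (3) for all u ∈ U(R) and w ∈ J(R), the equation t² − (1+w)t + (w − su) = 0 has a solution in R; (4) the matrix [[1,1],[u,w]] is quasipolar in K_s(R) for all u ∈ U(R) and w ∈ J(R). -/

import Mathlib

/-- The generalized matrix ring `K_s(R)` with multiplier `s`. -/
@[ext]
structure GenMatrix (R : Type*) (s : R) where
  a : R
  b : R
  c : R
  d : R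

namespace GenMatrix

variable {R : Type*} [Ring R] {s : R}

instance : Add (GenMatrix R s) :=
  ⟨fun X Y => ⟨X.a + Y.a, X.b + Y.b, X.c + Y.c, X.d + Y.d⟩⟩
instance : Neg (GenMatrix R s) := ⟨fun X => ⟨-X.a, -X.b, -X.c, -X.d⟩⟩
instance : Zero (GenMatrix R s) := ⟨⟨0, 0, 0, 0⟩⟩
instance : One (GenMatrix R s) := ⟨⟨1, 0, 0, 1⟩⟩
instance : Mul (GenMatrix R s) :=
  ⟨fun X Y => ⟨X.a * Y.a + s * (X.b * Y.c), X.a * Y.b + X.b * Y.d,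
    X.c * Y.a + X.d * Y.c, s * (X.c * Y.b) + X.d * Y.d⟩⟩

@[simp] lemma add_a (X Y : GenMatrix R s) : (X + Y).a = X.a + Y.a := rfl
@[simp] lemma add_b (X Y : GenMatrix R s) : (X + Y).b = X.b + Y.b := rfl
@[simp] lemma add_c (X Y : GenMatrix R s) : (X + Y).c = X.c + Y.c := rfl
@[simp] lemma add_d (X Y : GenMatrix R s) : (X + Y).d = X.d + Y.d := rfl
@[simp] lemma neg_a (X : GenMatrix R s) : (-X).a = -X.a := rfl
@[simp] lemma neg_b (X : GenMatrix R s) : (-X).b = -X.b := rfl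
@[simp] lemma neg_c (X : GenMatrix R s) : (-X).c = -X.c := rfl
@[simp] lemma neg_d (X : GenMatrix R s) : (-X).d = -X.d := rfl
@[simp] lemma zero_a : (0 : GenMatrix R s).a = 0 := rfl
@[simp] lemma zero_b : (0 : GenMatrix R s).b = 0 := rfl
@[simp] lemma zero_c : (0 : GenMatrix R s).c = 0 := rfl
@[simp] lemma zero_d : (0 : GenMatrix R s).d = 0 := rfl
@[simp] lemma one_a : (1 : GenMatrix R s).a = 1 := rfl
@[simp] lemma one_b : (1 : GenMatrix R s).b = 0 := rfl
@[simp] lemma one_c : (1 : GenMatrix R s).c = 0 := rfl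
@[simp] lemma one_d : (1 : GenMatrix R s).d = 1 := rfl
@[simp] lemma mul_a (X Y : GenMatrix R s) : (X * Y).a = X.a * Y.a + s * (X.b * Y.c) := rfl
@[simp] lemma mul_b (X Y : GenMatrix R s) : (X * Y).b = X.a * Y.b + X.b * Y.d := rfl
@[simp] lemma mul_c (X Y : GenMatrix R s) : (X * Y).c = X.c * Y.a + X.d * Y.c := rfl
@[simp] lemma mul_d (X Y : GenMatrix R s) : (X * Y).d = s * (X.c * Y.b) + X.d * Y.d := rfl

instance : AddCommGroup (GenMatrix R s) where
  add_assoc X Y Z := by ext <;> simp [add_assoc]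
  zero_add X := by ext <;> simp
  add_zero X := by ext <;> simp
  add_comm X Y := by ext <;> simp [add_comm]
  neg_add_cancel X := by ext <;> simp
  nsmul := nsmulRec
  zsmul := zsmulRec

section Central

variable [Fact (s ∈ Set.center R)]

lemma scomm (r : R) : r * s = s * r := Semigroup.mem_center_iff.mp Fact.out r

lemma sshift (r t : R) : r * (s * t) = s * (r * t) := by
  rw [← mul_assoc, scomm (s := s), mul_assoc]

instance : Ring (GenMatrix R s) where
  __ := (inferInstance : AddCommGroup (GenMatrix R s))
  left_distrib X Y Z := by ext <;> simp [mul_add, add_mul] <;> abel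
  right_distrib X Y Z := by ext <;> simp [mul_add, add_mul] <;> abel
  zero_mul X := by ext <;> simp
  mul_zero X := by ext <;> simp
  mul_assoc X Y Z := by
    ext <;> simp only [mul_a, mul_b, mul_c, mul_d, mul_add, add_mul, mul_assoc, sshift] <;> abel
  one_mul X := by ext <;> simp
  mul_one X := by ext <;> simp

end Central

instance central_of_comm {R : Type*} [CommRing R] (s : R) : Fact (s ∈ Set.center R) :=
  ⟨by rw [Set.center_eq_univ]; trivial⟩

/-- `det_s` of a generalized matrix over a commutative ring. -/
def dets {R : Type*} {s : R} [CommRing R] (A : GenMatrix R s) : R :=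
  A.a * A.d - s * (A.b * A.c)

/-- The trace of a generalized matrix. -/
def tr {R : Type*} {s : R} [Ring R] (A : GenMatrix R s) : R := A.a + A.d

end GenMatrix

/-- An element `a` is quasinilpotent if `1 + a*x` is a unit for every `x` commuting with `a`. -/
def IsQuasinilpotent {R : Type*} [Ring R] (a : R) : Prop :=
  ∀ x : R, a * x = x * a → IsUnit (1 + a * x)

/-- An element `a` is quasipolar if there is an idempotent `p` in the double commutant of `a`
with `a + p` a unit and `a * p` quasinilpotent. -/
def IsQuasipolar {R : Type*} [Ring R] (a : R) : Prop :=
  ∃ p : R, IsIdempotentElem p ∧ (∀ y : R, y * a = a * y → p * y = y * p) ∧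
    IsUnit (a + p) ∧ IsQuasinilpotent (a * p)

/-- A ring is quasipolar if every element is quasipolar. -/
def IsQuasipolarRing (R : Type*) [Ring R] : Prop := ∀ a : R, IsQuasipolar a

/-- An element is strongly clean if it is the sum of an idempotent and a unit that commute. -/
def IsStronglyClean {R : Type*} [Ring R] (a : R) : Prop :=
  ∃ e u : R, IsIdempotentElem e ∧ IsUnit u ∧ a = e + u ∧ e * u = u * e

/-- A ring is strongly clean if every element is strongly clean. -/
def IsStronglyCleanRing (R : Type*) [Ring R] : Prop := ∀ a : R, IsStronglyClean a

/-- `a` is similar to `b` if `b = u⁻¹ * a * u` for some unit `u`. -/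
def IsSimilar {R : Type*} [Ring R] (a b : R) : Prop :=
  ∃ u : Rˣ, b = ↑u⁻¹ * a * ↑u

/-- The Jacobson radical of a ring: the intersection of all maximal left ideals. -/
def JacobsonRadical (R : Type*) [Ring R] : Ideal R := Ideal.jacobson ⊥


section Aux

open GenMatrix

variable {R : Type*} [CommRing R] [IsLocalRing R] {s : R}

@[simp] lemma GenMatrix.sub_a (X Y : GenMatrix R s) : (X - Y).a = X.a - Y.a := by
  simp [sub_eq_add_neg]
@[simp] lemma GenMatrix.sub_b (X Y : GenMatrix R s) : (X - Y).b = X.b - Y.b := by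
  simp [sub_eq_add_neg]
@[simp] lemma GenMatrix.sub_c (X Y : GenMatrix R s) : (X - Y).c = X.c - Y.c := by
  simp [sub_eq_add_neg]
@[simp] lemma GenMatrix.sub_d (X Y : GenMatrix R s) : (X - Y).d = X.d - Y.d := by
  simp [sub_eq_add_neg]

lemma memJ_iff {x : R} : x ∈ JacobsonRadical R ↔ ¬ IsUnit x := by
  rw [JacobsonRadical, IsLocalRing.jacobson_eq_maximalIdeal ⊥ bot_ne_top,
    IsLocalRing.mem_maximalIdeal, mem_nonunits_iff]

lemma isUnit_add_of_memJ {u j : R} (hu : IsUnit u) (hj : j ∈ JacobsonRadical R) :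
    IsUnit (u + j) := by
  by_contra h
  have h1 : u + j ∈ JacobsonRadical R := memJ_iff.mpr h
  have h2 : u ∈ JacobsonRadical R := by
    have := (JacobsonRadical R).sub_mem h1 hj
    simpa using this
  exact memJ_iff.mp h2 hu

lemma dets_one : dets (1 : GenMatrix R s) = 1 := by simp [dets]

lemma dets_mul (X Y : GenMatrix R s) : dets (X * Y) = dets X * dets Y := by
  simp only [dets, mul_a, mul_b, mul_c, mul_d]; ring

lemma isUnit_of_isUnit_dets (A : GenMatrix R s) (h : IsUnit (dets A)) : IsUnit A := by
  obtain ⟨e, he⟩ := h.exists_right_inv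
  simp only [dets] at he
  refine isUnit_iff_exists.mpr ⟨⟨e * A.d, -(e * A.b), -(e * A.c), e * A.a⟩, ?_, ?_⟩ <;>
    ext <;> simp only [mul_a, mul_b, mul_c, mul_d, one_a, one_b, one_c, one_d] <;>
    first
      | linear_combination he
      | ring

lemma isUnit_dets_of_isUnit (A : GenMatrix R s) (h : IsUnit A) : IsUnit (dets A) := by
  obtain ⟨B, hB, -⟩ := isUnit_iff_exists.mp h
  exact IsUnit.of_mul_eq_one _ (by rw [← dets_mul, hB, dets_one])

lemma isUnit_dets_of_diag (hs : s ∈ JacobsonRadical R) (A : GenMatrix R s)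
    (ha : IsUnit A.a) (hd : IsUnit A.d) : IsUnit (dets A) := by
  have : dets A = A.a * A.d + -(s * (A.b * A.c)) := by rw [dets]; ring
  rw [this]
  exact isUnit_add_of_memJ (ha.mul hd)
    (neg_mem (Ideal.mul_mem_right _ _ hs))

lemma isUnit_one_add_of_diagJ (hs : s ∈ JacobsonRadical R) (X : GenMatrix R s)
    (h1 : X.a ∈ JacobsonRadical R) (h2 : X.d ∈ JacobsonRadical R) : IsUnit (1 + X) := by
  refine isUnit_of_isUnit_dets _ ?_
  have : dets (1 + X) = 1 + (X.a + X.d + X.a * X.d - s * (X.b * X.c)) := by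
    simp only [dets, add_a, add_b, add_c, add_d, one_a, one_b, one_c, one_d]; ring
  rw [this]
  refine isUnit_add_of_memJ isUnit_one ?_
  exact Ideal.sub_mem _ (Ideal.add_mem _ (Ideal.add_mem _ h1 h2)
    (Ideal.mul_mem_right _ _ h1)) (Ideal.mul_mem_right _ _ hs)

lemma diagJ_quasinilpotent (hs : s ∈ JacobsonRadical R) (M : GenMatrix R s)
    (h1 : M.a ∈ JacobsonRadical R) (h2 : M.d ∈ JacobsonRadical R) :
    IsQuasinilpotent M := by
  intro X _
  refine isUnit_one_add_of_diagJ hs (M * X) ?_ ?_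
  · exact Ideal.add_mem _ (Ideal.mul_mem_right _ _ h1) (Ideal.mul_mem_right _ _ hs)
  · exact Ideal.add_mem _ (Ideal.mul_mem_right _ _ hs) (Ideal.mul_mem_right _ _ h2)

lemma idem_diagJ_eq_zero (hs : s ∈ JacobsonRadical R) (q : GenMatrix R s)
    (hq : IsIdempotentElem q) (h1 : q.a ∈ JacobsonRadical R)
    (h2 : q.d ∈ JacobsonRadical R) : q = 0 := by
  have hu : IsUnit (1 - q) := by
    have := isUnit_one_add_of_diagJ hs (-q) (by simpa using neg_mem h1)
      (by simpa using neg_mem h2)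
    simpa [sub_eq_add_neg] using this
  obtain ⟨m, hm, -⟩ := isUnit_iff_exists.mp hu
  have h0 : q * (1 - q) = 0 := by rw [mul_sub, mul_one, hq.eq, sub_self]
  calc q = q * ((1 - q) * m) := by rw [hm, mul_one]
    _ = (q * (1 - q)) * m := by rw [mul_assoc]
    _ = 0 := by rw [h0, zero_mul]

lemma quasipolar_of_root (hs : s ∈ JacobsonRadical R) (A : GenMatrix R s) (α β : R)
    (hα : α ∈ JacobsonRadical R) (hβ : IsUnit β)
    (hsum : α + β = A.a + A.d) (hprod : α * β = A.a * A.d - s * (A.b * A.c))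
    (hdiag : (A.a ∈ JacobsonRadical R ∧ IsUnit A.d) ∨
      (IsUnit A.a ∧ A.d ∈ JacobsonRadical R)) :
    IsQuasipolar A := by
  have hβα : IsUnit (β - α) := by
    rw [sub_eq_add_neg]; exact isUnit_add_of_memJ hβ (neg_mem hα)
  obtain ⟨γ, hγ⟩ := hβα.exists_right_inv
  have hγu : IsUnit γ := IsUnit.of_mul_eq_one (β - α) (by linear_combination hγ)
  refine ⟨⟨γ * (β - A.a), -(γ * A.b), -(γ * A.c), γ * (β - A.d)⟩, ?_, ?_, ?_, ?_⟩
  · show (⟨_, _, _, _⟩ : GenMatrix R s) * _ = _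
    ext <;> simp only [mul_a, mul_b, mul_c, mul_d]
    · linear_combination (γ * (β - A.a)) * hγ - (γ^2 * A.a) * hsum + γ^2 * hprod
    · linear_combination (-(γ * A.b)) * hγ - (γ^2 * A.b) * hsum
    · linear_combination (-(γ * A.c)) * hγ - (γ^2 * A.c) * hsum
    · linear_combination (γ * (β - A.d)) * hγ - (γ^2 * A.d) * hsum + γ^2 * hprod
  · intro Y hY
    have ha : Y.a * A.a + s * (Y.b * A.c) = A.a * Y.a + s * (A.b * Y.c) :=
      congrArg GenMatrix.a hY
    have hb : Y.a * A.b + Y.b * A.d = A.a * Y.b + A.b * Y.d :=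
      congrArg GenMatrix.b hY
    have hc : Y.c * A.a + Y.d * A.c = A.c * Y.a + A.d * Y.c :=
      congrArg GenMatrix.c hY
    have hd : s * (Y.c * A.b) + Y.d * A.d = s * (A.c * Y.b) + A.d * Y.d :=
      congrArg GenMatrix.d hY
    ext <;> simp only [mul_a, mul_b, mul_c, mul_d]
    · linear_combination γ * ha
    · linear_combination γ * hb
    · linear_combination γ * hc
    · linear_combination γ * hd
  · refine isUnit_of_isUnit_dets _ (isUnit_dets_of_diag hs _ ?_ ?_) <;>
      simp only [add_a, add_d]
    · rcases hdiag with ⟨haJ, hdU⟩ | ⟨haU, hdJ⟩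
      · have : A.a + γ * (β - A.a) = γ * β + (A.a - γ * A.a) := by ring
        rw [this]
        exact isUnit_add_of_memJ (hγu.mul hβ)
          (Ideal.sub_mem _ haJ (Ideal.mul_mem_left _ _ haJ))
      · have hm : β - A.a = A.d - α := by linear_combination hsum
        refine isUnit_add_of_memJ haU ?_
        rw [hm]
        exact Ideal.mul_mem_left _ _ (Ideal.sub_mem _ hdJ hα)
    · rcases hdiag with ⟨haJ, hdU⟩ | ⟨haU, hdJ⟩
      · have hm : β - A.d = A.a - α := by linear_combination hsum
        refine isUnit_add_of_memJ hdU ?_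
        rw [hm]
        exact Ideal.mul_mem_left _ _ (Ideal.sub_mem _ haJ hα)
      · have : A.d + γ * (β - A.d) = γ * β + (A.d - γ * A.d) := by ring
        rw [this]
        exact isUnit_add_of_memJ (hγu.mul hβ)
          (Ideal.sub_mem _ hdJ (Ideal.mul_mem_left _ _ hdJ))
  · refine diagJ_quasinilpotent hs _ ?_ ?_ <;> simp only [mul_a, mul_d]
    · have : A.a * (γ * (β - A.a)) + s * (A.b * -(γ * A.c)) = α * (γ * (β - A.a)) := by
        linear_combination (γ * A.a) * hsum - γ * hprod
      rw [this]
      exact Ideal.mul_mem_right _ _ hα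
    · have : s * (A.c * -(γ * A.b)) + A.d * (γ * (β - A.d)) = α * (γ * (β - A.d)) := by
        linear_combination (γ * A.d) * hsum - γ * hprod
      rw [this]
      exact Ideal.mul_mem_right _ _ hα

lemma exists_split (τ δ : R) (hτ : IsUnit τ) (hδ : δ ∈ JacobsonRadical R) (t : R)
    (ht : t ^ 2 - τ * t + δ = 0) :
    ∃ α β : R, α ∈ JacobsonRadical R ∧ IsUnit β ∧ α + β = τ ∧ α * β = δ := by
  by_cases hu : IsUnit t
  · obtain ⟨e, he⟩ := hu.exists_right_inv
    refine ⟨τ - t, t, ?_, hu, by ring, by linear_combination -ht⟩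
    have : τ - t = δ * e := by linear_combination (-e) * ht - (τ - t) * he
    rw [this]
    exact Ideal.mul_mem_right _ _ hδ
  · have htJ : t ∈ JacobsonRadical R := memJ_iff.mpr hu
    refine ⟨t, τ - t, htJ, ?_, by ring, by linear_combination -ht⟩
    rw [sub_eq_add_neg]
    exact isUnit_add_of_memJ hτ (neg_mem htJ)

end Aux


/-- for a commutative local ring `R` and `s ∈ J(R)`, the following are
equivalent: (1) `K_s(R)` is quasipolar; (2) for all units `u, v` and `w ∈ J(R)` the
equation `t² - (u+w)t + (uw - sv) = 0` is solvable; (3) for all units `u` and `w ∈ J(R)`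
the equation `t² - (1+w)t + (w - su) = 0` is solvable; (4) `[[1,1],[u,w]]` is quasipolar
in `K_s(R)` for all units `u` and all `w ∈ J(R)`. -/
theorem genMatrix_isQuasipolarRing_tfae_of_mem_jacobson {R : Type*} [CommRing R]
    [IsLocalRing R] (s : R) (hs : s ∈ JacobsonRadical R) :
    List.TFAE
      [IsQuasipolarRing (GenMatrix R s),
       ∀ u v w : R, IsUnit u → IsUnit v → w ∈ JacobsonRadical R →
         ∃ t : R, t ^ 2 - (u + w) * t + (u * w - s * v) = 0,
       ∀ u w : R, IsUnit u → w ∈ JacobsonRadical R →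
         ∃ t : R, t ^ 2 - (1 + w) * t + (w - s * u) = 0,
       ∀ u w : R, IsUnit u → w ∈ JacobsonRadical R →
         IsQuasipolar (⟨1, 1, u, w⟩ : GenMatrix R s)] := by
  tfae_have 1 → 4 := fun h1 u w _ _ => h1 _
  tfae_have 4 → 3 := by
    intro h4 u w hu hw
    obtain ⟨p, hidem, hcomm, hunitAp, hqn⟩ := h4 u w hu hw
    set A : GenMatrix R s := ⟨1, 1, u, w⟩ with hA
    have hpA : p * A = A * p := hcomm A rfl
    have hb : p.a * 1 + p.b * w = 1 * p.b + 1 * p.d := congrArg GenMatrix.b hpA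
    have hc : p.c * 1 + p.d * u = u * p.a + w * p.c := congrArg GenMatrix.c hpA
    have hi1 : p.a * p.a + s * (p.b * p.c) = p.a := congrArg GenMatrix.a hidem
    have hib : p.a * p.b + p.b * p.d = p.b := congrArg GenMatrix.b hidem
    have h1w : IsUnit (1 - w) := by
      rw [sub_eq_add_neg]; exact isUnit_add_of_memJ isUnit_one (neg_mem hw)
    obtain ⟨iw, hiw⟩ := h1w.exists_right_inv
    have hz : p.c = u * p.b := by
      linear_combination iw * hc + (iw * u) * hb - (p.c - u * p.b) * hiw
    by_cases hy : IsUnit p.b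
    · obtain ⟨e, he⟩ := hy.exists_right_inv
      have hxt : p.a + p.d = 1 := by
        linear_combination e * hib - (p.a + p.d - 1) * he
      have h1' : p.a * p.a + s * u * (p.b * p.b) = p.a := by
        linear_combination hi1 - s * p.b * hz
      refine ⟨1 - p.a * e, ?_⟩
      linear_combination (e^2 * p.a) * hxt + (e^2 * p.a) * hb - e^2 * h1' +
        (p.a * e - w * p.a * e + s * u * (p.b * e + 1)) * he
    · have hyJ : p.b ∈ JacobsonRadical R := memJ_iff.mpr hy
      have hdd : p.d = p.a + p.b * w - p.b := by linear_combination -hb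
      have hxx : p.a * (p.a - 1) ∈ JacobsonRadical R := by
        have : p.a * (p.a - 1) = -(s * (p.b * p.c)) := by linear_combination hi1
        rw [this]
        exact neg_mem (Ideal.mul_mem_right _ _ hs)
      by_cases hpa : IsUnit p.a
      · have h1J : p.a - 1 ∈ JacobsonRadical R :=
          memJ_iff.mpr fun h => (memJ_iff.mp hxx) (hpa.mul h)
        have hq0 : (1 : GenMatrix R s) - p = 0 := by
          refine idem_diagJ_eq_zero hs _ hidem.one_sub ?_ ?_
          · simp only [GenMatrix.sub_a, GenMatrix.one_a]
            have : (1 : R) - p.a = -(p.a - 1) := by ring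
            rw [this]; exact neg_mem h1J
          · simp only [GenMatrix.sub_d, GenMatrix.one_d]
            have : (1 : R) - p.d = -((p.a - 1) + p.b * w - p.b) := by
              rw [hdd]; ring
            rw [this]
            exact neg_mem (Ideal.sub_mem _ (Ideal.add_mem _ h1J
              (Ideal.mul_mem_right _ _ hyJ)) hyJ)
        have hp1 : p = 1 := by
          have := sub_eq_zero.mp hq0; exact this.symm
        rw [hp1, mul_one] at hqn
        have hqu : IsUnit (1 + A * (-1)) := hqn (-1) (by rw [mul_neg_one, neg_one_mul])
        have h1A : (1 : GenMatrix R s) + A * (-1) = 1 - A := by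
          rw [mul_neg_one, ← sub_eq_add_neg]
        rw [h1A] at hqu
        have hdu := isUnit_dets_of_isUnit _ hqu
        have hdets : GenMatrix.dets (1 - A) = -(s * u) := by
          simp only [GenMatrix.dets, GenMatrix.sub_a, GenMatrix.sub_b, GenMatrix.sub_c,
            GenMatrix.sub_d, GenMatrix.one_a, GenMatrix.one_b, GenMatrix.one_c,
            GenMatrix.one_d, hA]
          ring
        rw [hdets] at hdu
        exact absurd hdu (memJ_iff.mp (neg_mem (Ideal.mul_mem_right _ _ hs)))
      · have hpaJ : p.a ∈ JacobsonRadical R := memJ_iff.mpr hpa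
        have hp0 : p = 0 := by
          refine idem_diagJ_eq_zero hs _ hidem hpaJ ?_
          rw [hdd]
          exact Ideal.sub_mem _ (Ideal.add_mem _ hpaJ (Ideal.mul_mem_right _ _ hyJ)) hyJ
        rw [hp0, add_zero] at hunitAp
        have hdu := isUnit_dets_of_isUnit _ hunitAp
        have hdets : GenMatrix.dets A = w - s * u := by
          simp only [GenMatrix.dets, hA]; ring
        rw [hdets] at hdu
        exact absurd hdu (memJ_iff.mp
          (Ideal.sub_mem _ hw (Ideal.mul_mem_right _ _ hs)))
  tfae_have 3 → 2 := by
    intro h3 u v w hu hv hw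
    obtain ⟨i, hi⟩ := hu.exists_right_inv
    have hiu : IsUnit i := IsUnit.of_mul_eq_one u (by linear_combination hi)
    obtain ⟨r, hr⟩ := h3 (v * (i * i)) (w * i) (hv.mul (hiu.mul hiu))
      (Ideal.mul_mem_right _ _ hw)
    refine ⟨u * r, ?_⟩
    linear_combination u^2 * hr + (u * w * r - u * w + s * v * (u * i + 1)) * hi
  tfae_have 2 → 1 := by
    intro h2 A
    by_cases ha : IsUnit A.a <;> by_cases hd : IsUnit A.d
    · -- both units
      refine ⟨0, IsIdempotentElem.zero, fun y _ => by rw [zero_mul, mul_zero], ?_, ?_⟩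
      · rw [add_zero]
        exact isUnit_of_isUnit_dets A (isUnit_dets_of_diag hs A ha hd)
      · rw [mul_zero]
        intro x _
        rw [zero_mul, add_zero]
        exact isUnit_one
    · -- A.a unit, A.d ∈ J
      have hdJ : A.d ∈ JacobsonRadical R := memJ_iff.mpr hd
      have hτ : IsUnit (A.a + A.d) := isUnit_add_of_memJ ha hdJ
      have hδ : A.a * A.d - s * (A.b * A.c) ∈ JacobsonRadical R :=
        Ideal.sub_mem _ (Ideal.mul_mem_left _ _ hdJ) (Ideal.mul_mem_right _ _ hs)
      have hroot : ∃ t : R, t ^ 2 - (A.a + A.d) * t +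
          (A.a * A.d - s * (A.b * A.c)) = 0 := by
        by_cases hbc : IsUnit (A.b * A.c)
        · obtain ⟨t, ht⟩ := h2 A.a (A.b * A.c) A.d ha hbc hdJ
          exact ⟨t, by linear_combination ht⟩
        · have hbcJ : A.b * A.c ∈ JacobsonRadical R := memJ_iff.mpr hbc
          have hv : IsUnit (A.b * A.c + A.d - A.a - s) := by
            by_contra h
            have hmem := memJ_iff.mpr h
            have : A.a ∈ JacobsonRadical R := by
              have h' := Ideal.sub_mem _ (Ideal.add_mem _ hbcJ hdJ)
                (Ideal.add_mem _ hmem hs)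
              have he : A.a = A.b * A.c + A.d - (A.b * A.c + A.d - A.a - s + s) := by ring
              rw [he]; exact h'
            exact memJ_iff.mp this ha
          obtain ⟨t, ht⟩ := h2 (A.a + s) (A.b * A.c + A.d - A.a - s) (A.d - s)
            (isUnit_add_of_memJ ha hs) hv (Ideal.sub_mem _ hdJ hs)
          exact ⟨t, by linear_combination ht⟩
      obtain ⟨t, ht⟩ := hroot
      obtain ⟨α, β, hα, hβ, hsum, hprod⟩ := exists_split _ _ hτ hδ t ht
      exact quasipolar_of_root hs A α β hα hβ hsum hprod (Or.inr ⟨ha, hdJ⟩)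
    · -- A.a ∈ J, A.d unit
      have haJ : A.a ∈ JacobsonRadical R := memJ_iff.mpr ha
      have hτ : IsUnit (A.a + A.d) := by
        rw [add_comm]; exact isUnit_add_of_memJ hd haJ
      have hδ : A.a * A.d - s * (A.b * A.c) ∈ JacobsonRadical R :=
        Ideal.sub_mem _ (Ideal.mul_mem_right _ _ haJ) (Ideal.mul_mem_right _ _ hs)
      have hroot : ∃ t : R, t ^ 2 - (A.a + A.d) * t +
          (A.a * A.d - s * (A.b * A.c)) = 0 := by
        by_cases hbc : IsUnit (A.b * A.c)
        · obtain ⟨t, ht⟩ := h2 A.d (A.b * A.c) A.a hd hbc haJ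
          exact ⟨t, by linear_combination ht⟩
        · have hbcJ : A.b * A.c ∈ JacobsonRadical R := memJ_iff.mpr hbc
          have hv : IsUnit (A.b * A.c + A.a - A.d - s) := by
            by_contra h
            have hmem := memJ_iff.mpr h
            have : A.d ∈ JacobsonRadical R := by
              have h' := Ideal.sub_mem _ (Ideal.add_mem _ hbcJ haJ)
                (Ideal.add_mem _ hmem hs)
              have he : A.d = A.b * A.c + A.a - (A.b * A.c + A.a - A.d - s + s) := by ring
              rw [he]; exact h'
            exact memJ_iff.mp this hd
          obtain ⟨t, ht⟩ := h2 (A.d + s) (A.b * A.c + A.a - A.d - s) (A.a - s)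
            (isUnit_add_of_memJ hd hs) hv (Ideal.sub_mem _ haJ hs)
          exact ⟨t, by linear_combination ht⟩
      obtain ⟨t, ht⟩ := hroot
      obtain ⟨α, β, hα, hβ, hsum, hprod⟩ := exists_split _ _ hτ hδ t ht
      exact quasipolar_of_root hs A α β hα hβ hsum hprod (Or.inl ⟨haJ, hd⟩)
    · -- both in J
      have haJ : A.a ∈ JacobsonRadical R := memJ_iff.mpr ha
      have hdJ : A.d ∈ JacobsonRadical R := memJ_iff.mpr hd
      refine ⟨1, IsIdempotentElem.one, fun y _ => by rw [one_mul, mul_one], ?_, ?_⟩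
      · rw [add_comm]
        exact isUnit_one_add_of_diagJ hs A haJ hdJ
      · rw [mul_one]
        exact diagJ_quasinilpotent hs A haJ hdJ
  tfae_finish
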